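/- Let F(θ) = (1/2)(1 − (1−2θ)/√(θ² + (1−θ)²)). Then the failure probability under F equals 1/2; i.e., ∫₀¹ θ · f(θ) dθ = 1/2 where f(θ) = (1/2)(θ² + (1−θ)²)^{−3/2}, equivalently 1 − ∫₀¹ F(t) dt = 1/2. -/

import Mathlib

open MeasureTheory Set

/-- The equilibrium cdf of the endogenous test-selection game on `[0,1]`. -/
noncomputable def Feq (θ : ℝ) : ℝ :=
  (1/2) * (1 - (1 - 2*θ) / Real.sqrt (θ^2 + (1-θ)^2))

/-- The equilibrium density `f(θ) = (1/2)(θ² + (1-θ)²)^{-3/2}`. -/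
noncomputable def feq (θ : ℝ) : ℝ := 1 / (2 * Real.sqrt (θ^2 + (1-θ)^2) ^ 3)


lemma gpos (θ : ℝ) : (0:ℝ) < θ^2 + (1-θ)^2 := by nlinarith [sq_nonneg (2*θ-1)]

lemma spos (θ : ℝ) : 0 < Real.sqrt (θ^2 + (1-θ)^2) := Real.sqrt_pos.mpr (gpos θ)

lemma hderiv (θ : ℝ) : HasDerivAt Feq (feq θ) θ := by
  have hg := gpos θ
  have hs := spos θ
  have hs2 : Real.sqrt (θ^2 + (1-θ)^2) ^ 2 = θ^2 + (1-θ)^2 := Real.sq_sqrt hg.le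
  have hA : HasDerivAt (fun x : ℝ => x^2 + (1-x)^2) (4*θ - 2) θ := by
    have h := ((hasDerivAt_id θ).pow 2).add (((hasDerivAt_const θ (1:ℝ)).sub (hasDerivAt_id θ)).pow 2)
    refine h.congr_deriv ?_
    simp
    ring
  have hsq : HasDerivAt (fun x : ℝ => Real.sqrt (x^2 + (1-x)^2))
      ((4*θ - 2) / (2 * Real.sqrt (θ^2 + (1-θ)^2))) θ := hA.sqrt hg.ne'
  have hnum : HasDerivAt (fun x : ℝ => 1 - 2*x) (-2 : ℝ) θ := by
    have h := (hasDerivAt_const θ (1:ℝ)).sub ((hasDerivAt_id θ).const_mul 2)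
    refine h.congr_deriv ?_; ring
  have hdiv := hnum.div hsq hs.ne'
  have hF := ((hasDerivAt_const θ (1:ℝ)).sub hdiv).const_mul (1/2 : ℝ)
  refine hF.congr_deriv ?_
  unfold feq
  set s := Real.sqrt (θ^2 + (1-θ)^2) with hsdef
  field_simp
  linear_combination 4 * hs2

lemma feq_cont : Continuous feq := by
  unfold feq
  refine continuous_const.div (by continuity) fun x => ?_
  have := spos x
  positivity

lemma Feq_cont : Continuous Feq := by
  unfold Feq
  have h1 : Continuous fun θ : ℝ => (1 - 2*θ) := by continuity
  have h2 : Continuous fun θ : ℝ => Real.sqrt (θ^2 + (1-θ)^2) := by continuity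
  exact continuous_const.mul (continuous_const.sub (h1.div h2 fun x => (spos x).ne'))

lemma int_feq : (∫ θ in (0:ℝ)..1, feq θ) = 1 := by
  have h := intervalIntegral.integral_eq_sub_of_hasDerivAt (f := Feq)
    (fun x _ => hderiv x) (feq_cont.intervalIntegrable 0 1)
  rw [h]
  unfold Feq
  norm_num [Real.sqrt_one]

lemma feq_sym (x : ℝ) : feq (1 - x) = feq x := by
  have h : (1-x)^2 + (1-(1-x))^2 = x^2 + (1-x)^2 := by ring
  unfold feq
  rw [h]

/-- The failure probability under the equilibrium distribution is `1/2`: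
`∫₀¹ θ f(θ) dθ = 1/2`, equivalently `1 - ∫₀¹ F = 1/2`. -/
theorem stmt_15 :
    (∫ θ in (0:ℝ)..1, θ * feq θ) = 1/2 ∧
    1 - (∫ t in (0:ℝ)..1, Feq t) = 1/2 := by
  constructor
  · have h1 : (∫ θ in (0:ℝ)..1, (1-θ) * feq θ) = ∫ θ in (0:ℝ)..1, θ * feq θ := by
      have h := intervalIntegral.integral_comp_sub_left (fun x => x * feq x) 1 (a := 0) (b := 1)
      simp only [sub_zero, sub_self] at h
      rw [← h]
      congr 1
      ext x
      rw [feq_sym]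
    have h2 : (∫ θ in (0:ℝ)..1, θ * feq θ) + (∫ θ in (0:ℝ)..1, (1-θ) * feq θ) = 1 := by
      rw [← intervalIntegral.integral_add (f := fun θ => θ * feq θ) (g := fun θ => (1-θ) * feq θ)
        ((continuous_id'.mul feq_cont).intervalIntegrable 0 1)
        (((continuous_const.sub continuous_id').mul feq_cont).intervalIntegrable 0 1)]
      have heq : (∫ θ in (0:ℝ)..1, (θ * feq θ + (1-θ) * feq θ)) = ∫ θ in (0:ℝ)..1, feq θ := by
        apply intervalIntegral.integral_congr
        intro x _
        ring
      rw [heq, int_feq]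
    linarith
  · have hsum : ∀ t : ℝ, Feq (1 - t) = 1 - Feq t := by
      intro t
      unfold Feq
      have h : (1-t)^2 + (1-(1-t))^2 = t^2 + (1-t)^2 := by ring
      rw [h]
      have hs := (spos t).ne'
      field_simp
      ring
    have h1 : (∫ t in (0:ℝ)..1, Feq (1 - t)) = ∫ t in (0:ℝ)..1, Feq t := by
      have h := intervalIntegral.integral_comp_sub_left Feq 1 (a := 0) (b := 1)
      simpa using h
    have h2 : (∫ t in (0:ℝ)..1, Feq (1 - t)) = ∫ t in (0:ℝ)..1, (1 - Feq t) := by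
      congr 1; ext t; rw [hsum]
    have h3 : (∫ t in (0:ℝ)..1, (1 - Feq t)) = 1 - ∫ t in (0:ℝ)..1, Feq t := by
      rw [intervalIntegral.integral_sub (intervalIntegrable_const) (Feq_cont.intervalIntegrable 0 1)]
      simp
    linarith [h1.symm.trans (h2.trans h3)]
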